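/- Let X be a smooth Banach manifold admitting smooth cut-off functions, i.e. for every point x ∈ X and every open neighborhood O of x there is a smooth function β : X → [0,1] equal to 1 on some neighborhood of x and with support contained in O. Let p : E → X be a smooth Banach vector bundle and S : X → E a smooth section whose zero locus Z(S) is compact and such that at every x ∈ Z(S) the vertical differential DS(x) : T_xX → E_x is a Fredholm operator. Then there exist an open neighborhood 𝒪(Z(S)) of Z(S) in X and finitely many smooth sections σ₁, …, σ_m of E such that: (i) DS(y)(T_yX) + span{σ₁(y), …, σ_m(y)} = E_y for every y ∈ Z(S); and (ii) supp(σ_i) ⊆ 𝒪(Z(S)) for i = 1, …, m. -/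

import Mathlib

open Bundle

/-- A continuous linear operator between topological real modules is **Fredholm** if its kernel
is finite-dimensional and its image is closed and of finite codimension. -/
def IsFredholm {E F : Type*} [AddCommGroup E] [Module ℝ E] [TopologicalSpace E]
    [AddCommGroup F] [Module ℝ F] [TopologicalSpace F] (T : E →L[ℝ] F) : Prop :=
  FiniteDimensional ℝ (LinearMap.ker (T : E →ₗ[ℝ] F)) ∧
    IsClosed ((LinearMap.range (T : E →ₗ[ℝ] F) : Submodule ℝ F) : Set F) ∧
    FiniteDimensional ℝ (F ⧸ LinearMap.range (T : E →ₗ[ℝ] F))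

open Function Set

theorem aux_eventually_surjective {E F : Type*} [NormedAddCommGroup E] [NormedSpace ℝ E]
    [CompleteSpace E] [NormedAddCommGroup F] [NormedSpace ℝ F] [CompleteSpace F]
    {T : E →L[ℝ] F} (hT : Surjective T) :
    ∀ᶠ T' : E →L[ℝ] F in nhds T, Surjective T' := by
  obtain ⟨C, hC0, hC⟩ := T.exists_preimage_norm_le hT
  choose P hP hPn using hC
  have : ∀ T' : E →L[ℝ] F, dist T' T < 1 / (2 * C) → Surjective T' := ?_
  · filter_upwards [Metric.ball_mem_nhds T (by positivity : (0:ℝ) < 1 / (2 * C))] with T' hT'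
    exact this T' hT'
  intro T' hT' y
  rw [dist_eq_norm] at hT'
  -- iterate
  let w : ℕ → F := fun n => Nat.rec y (fun _ z => z - T' (P z)) n
  have hw0 : w 0 = y := rfl
  have hws : ∀ n, w (n + 1) = w n - T' (P (w n)) := fun n => rfl
  have key : ∀ n, ‖w (n + 1)‖ ≤ (1 / 2) * ‖w n‖ := by
    intro n
    have : w (n + 1) = (T - T') (P (w n)) := by
      rw [hws n, ContinuousLinearMap.sub_apply, hP (w n)]
    rw [this]
    calc ‖(T - T') (P (w n))‖ ≤ ‖T - T'‖ * ‖P (w n)‖ := (T - T').le_opNorm _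
      _ ≤ (1 / (2 * C)) * (C * ‖w n‖) := by
          apply mul_le_mul (le_of_lt (by rwa [norm_sub_rev])) (hPn _) (norm_nonneg _)
          positivity
      _ = (1 / 2) * ‖w n‖ := by field_simp
  have hwn : ∀ n, ‖w n‖ ≤ (1 / 2) ^ n * ‖y‖ := by
    intro n
    induction n with
    | zero => simp [hw0]
    | succ n ih =>
      calc ‖w (n + 1)‖ ≤ (1 / 2) * ‖w n‖ := key n
        _ ≤ (1 / 2) * ((1 / 2) ^ n * ‖y‖) := by linarith [key n]
        _ = (1 / 2) ^ (n + 1) * ‖y‖ := by ring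
  have hsum : Summable fun n => P (w n) := by
    apply Summable.of_norm
    apply Summable.of_nonneg_of_le (fun n => norm_nonneg _)
      (fun n => (hPn (w n)).trans (by
        have := hwn n
        calc C * ‖w n‖ ≤ C * ((1/2)^n * ‖y‖) := by nlinarith
          _ = (C * ‖y‖) * (1/2)^n := by ring))
    exact (summable_geometric_of_lt_one (r := (1/2:ℝ)) (by norm_num) (by norm_num)).mul_left _
  refine ⟨∑' n, P (w n), ?_⟩
  have hmap : T' (∑' n, P (w n)) = ∑' n, T' (P (w n)) := T'.map_tsum hsum
  have hsum2 : Summable fun n => T' (P (w n)) := hsum.map T' T'.continuous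
  have htel : ∀ n, T' (P (w n)) = w n - w (n + 1) := by
    intro n; rw [hws n]; abel
  have hlim : Filter.Tendsto w Filter.atTop (nhds 0) := by
    have : Filter.Tendsto (fun n => (1 / 2 : ℝ) ^ n * ‖y‖) Filter.atTop (nhds 0) := by
      simpa using (tendsto_pow_atTop_nhds_zero_of_lt_one (r := (1/2:ℝ)) (by norm_num) (by norm_num)).mul_const ‖y‖
    exact squeeze_zero_norm hwn this
  have hpartial : ∀ n, ∑ i ∈ Finset.range n, T' (P (w i)) = y - w n := by
    intro n
    induction n with
    | zero => simp [hw0]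
    | succ n ih => rw [Finset.sum_range_succ, ih, htel n]; abel
  have h2 : Filter.Tendsto (fun n => ∑ i ∈ Finset.range n, T' (P (w i)))
      Filter.atTop (nhds y) := by
    simp only [hpartial]
    simpa using (tendsto_const_nhds (x := y)).sub hlim
  rw [hmap]
  exact tendsto_nhds_unique hsum2.hasSum.tendsto_sum_nat h2

theorem aux_exists_sup_span {F : Type*} [AddCommGroup F] [Module ℝ F]
    (R : Submodule ℝ F) (h : FiniteDimensional ℝ (F ⧸ R)) :
    ∃ (k : ℕ) (v : Fin k → F), R ⊔ Submodule.span ℝ (range v) = ⊤ := by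
  obtain ⟨k, s, hs⟩ := Module.Finite.exists_fin (R := ℝ) (M := F ⧸ R)
  choose v hv using fun j => Submodule.mkQ_surjective R (s j)
  refine ⟨k, v, ?_⟩
  have hmap : Submodule.map R.mkQ (R ⊔ Submodule.span ℝ (range v)) = ⊤ := by
    rw [Submodule.map_sup, Submodule.map_span, ← range_comp]
    have : R.mkQ ∘ v = s := funext hv
    rw [this, hs]
    simp
  have := congrArg (Submodule.comap R.mkQ) hmap
  rw [Submodule.comap_map_eq, Submodule.comap_top, Submodule.ker_mkQ] at this
  rwa [sup_right_comm, sup_idem] at this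

open ContinuousLinearMap in
theorem aux_range_combine {B F : Type*} [NormedAddCommGroup B] [NormedSpace ℝ B]
    [NormedAddCommGroup F] [NormedSpace ℝ F] {k : ℕ} (T : B →L[ℝ] F) (v : Fin k → F) :
    LinearMap.range ((T.comp (fst ℝ B (Fin k → ℝ)) +
      (LinearMap.toContinuousLinearMap (Fintype.linearCombination ℝ v)).comp
        (snd ℝ B (Fin k → ℝ)) : B × (Fin k → ℝ) →L[ℝ] F) : B × (Fin k → ℝ) →ₗ[ℝ] F) =
    LinearMap.range (T : B →ₗ[ℝ] F) ⊔ Submodule.span ℝ (Set.range v) := by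
  apply le_antisymm
  · rintro f ⟨⟨b, c⟩, rfl⟩
    show T b + ∑ i, c i • v i ∈ _
    exact Submodule.add_mem _ (Submodule.mem_sup_left (LinearMap.mem_range_self _ b))
      (Submodule.mem_sup_right (Submodule.sum_mem _ fun i _ =>
        Submodule.smul_mem _ _ (Submodule.subset_span (Set.mem_range_self i))))
  · rw [sup_le_iff]
    constructor
    · rintro f ⟨b, rfl⟩
      refine ⟨(b, 0), ?_⟩
      simp [Fintype.linearCombination_apply]
    · rw [Submodule.span_le]
      rintro f ⟨j, rfl⟩
      refine ⟨(0, Pi.single j 1), ?_⟩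
      simp

theorem aux_chart_mfderiv_surj {B : Type*} [NormedAddCommGroup B] [NormedSpace ℝ B]
    {X : Type*} [TopologicalSpace X] [ChartedSpace B X]
    [IsManifold (modelWithCornersSelf ℝ B) ((⊤ : ℕ∞) : WithTop ℕ∞) X]
    (x : X) {y : X} (hy : y ∈ (chartAt B x).source) :
    Function.Surjective
      (mfderiv (modelWithCornersSelf ℝ B) (modelWithCornersSelf ℝ B) (chartAt B x) y) := by
  set ψ := chartAt B x
  have hψy : ψ y ∈ ψ.target := ψ.map_source hy
  have h1 : MDifferentiableAt (modelWithCornersSelf ℝ B) (modelWithCornersSelf ℝ B) ψ y :=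
    ((contMDiffOn_chart (n := (⊤ : ℕ∞))).contMDiffAt (ψ.open_source.mem_nhds hy)).mdifferentiableAt (by simp)
  have h2 : MDifferentiableAt (modelWithCornersSelf ℝ B) (modelWithCornersSelf ℝ B) ψ.symm
      (ψ y) :=
    ((contMDiffOn_chart_symm (n := (⊤ : ℕ∞))).contMDiffAt
      (ψ.open_target.mem_nhds hψy)).mdifferentiableAt (by simp)
  have heq : (ψ ∘ ψ.symm : B → B) =ᶠ[nhds (ψ y)] id := by
    filter_upwards [ψ.open_target.mem_nhds hψy] with b hb using ψ.right_inv hb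
  have hcomp := mfderiv_comp (I := modelWithCornersSelf ℝ B) (I' := modelWithCornersSelf ℝ B)
    (I'' := modelWithCornersSelf ℝ B) (ψ y) (by rwa [ψ.left_inv hy]) h2
  rw [heq.mfderiv_eq, mfderiv_id] at hcomp
  intro w
  have := congrFun (congrArg (fun (T : B →L[ℝ] B) => (T : B → B)) hcomp) w
  change w = (mfderiv (modelWithCornersSelf ℝ B) (modelWithCornersSelf ℝ B) ψ (ψ.symm (ψ y)))
    ((mfderiv (modelWithCornersSelf ℝ B) (modelWithCornersSelf ℝ B) ψ.symm (ψ y)) w) at this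
  rw [ψ.left_inv hy] at this
  exact ⟨_, this.symm⟩

theorem aux_equiv_sup {F : Type*} [AddCommGroup F] [Module ℝ F] {k : ℕ}
    (g : F →ₗ[ℝ] F) (hgi : Function.Injective g) (hgs : Function.Surjective g)
    (R : Submodule ℝ F) (v : Fin k → F) :
    Submodule.map g R ⊔ Submodule.span ℝ (Set.range fun j => g (v j)) = ⊤ ↔
      R ⊔ Submodule.span ℝ (Set.range v) = ⊤ := by
  rw [show (Set.range fun j => g (v j)) = ⇑g '' Set.range v by rw [← Set.range_comp]; rfl,
    ← Submodule.map_span, ← Submodule.map_sup]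
  constructor
  · intro h
    have := congrArg (Submodule.comap g) h
    rwa [Submodule.comap_map_eq_of_injective hgi, Submodule.comap_top] at this
  · intro h
    rw [h, Submodule.map_top, LinearMap.range_eq_top.mpr hgs]

theorem aux_range_comp {V B F : Type*} [AddCommGroup V] [Module ℝ V] [TopologicalSpace V]
    [AddCommGroup B] [Module ℝ B] [TopologicalSpace B]
    [AddCommGroup F] [Module ℝ F] [TopologicalSpace F]
    (g : F →L[ℝ] F) (h : B →L[ℝ] F) (D : V →L[ℝ] B) (hD : Function.Surjective D) :
    LinearMap.range (((g.comp h).comp D : V →L[ℝ] F) : V →ₗ[ℝ] F) =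
      Submodule.map (g : F →ₗ[ℝ] F) (LinearMap.range (h : B →ₗ[ℝ] F)) := by
  apply le_antisymm
  · rintro f ⟨w, rfl⟩
    exact ⟨h (D w), ⟨D w, rfl⟩, rfl⟩
  · rintro f ⟨u, ⟨b, rfl⟩, rfl⟩
    obtain ⟨w, rfl⟩ := hD b
    exact ⟨w, rfl⟩


open Bundle in
theorem aux_local
    {B : Type*} [NormedAddCommGroup B] [NormedSpace ℝ B] [CompleteSpace B]
    {X : Type*} [TopologicalSpace X] [ChartedSpace B X]
    [IsManifold (modelWithCornersSelf ℝ B) ((⊤ : ℕ∞) : WithTop ℕ∞) X]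
    {F : Type*} [NormedAddCommGroup F] [NormedSpace ℝ F] [CompleteSpace F]
    (E : X → Type*) [∀ x, TopologicalSpace (E x)] [∀ x, AddCommGroup (E x)]
    [∀ x, Module ℝ (E x)]
    [TopologicalSpace (TotalSpace F E)] [FiberBundle F E] [VectorBundle ℝ F E]
    [ContMDiffVectorBundle ((⊤ : ℕ∞) : WithTop ℕ∞) F E (modelWithCornersSelf ℝ B)]
    (hcut : ∀ (x : X) (O : Set X), IsOpen O → x ∈ O →
      ∃ β : X → ℝ, ContMDiff (modelWithCornersSelf ℝ B) (modelWithCornersSelf ℝ ℝ) (⊤ : ℕ∞) β ∧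
        (∀ y, β y ∈ Set.Icc (0 : ℝ) 1) ∧ (∀ᶠ y in nhds x, β y = 1) ∧ tsupport β ⊆ O)
    (S : ∀ x, E x)
    (hS : ContMDiff (modelWithCornersSelf ℝ B)
      ((modelWithCornersSelf ℝ B).prod (modelWithCornersSelf ℝ F)) (⊤ : ℕ∞)
      fun x => TotalSpace.mk' F x (S x))
    (x : X) (hx : S x = 0)
    (hFredx : IsFredholm (mfderiv (modelWithCornersSelf ℝ B) (modelWithCornersSelf ℝ F)
      (fun y => (trivializationAt F E x (TotalSpace.mk' F y (S y))).2) x)) :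
    ∃ (k : ℕ) (σ : Fin k → ∀ z, E z) (W : Set X), IsOpen W ∧ x ∈ W ∧
      (∀ j, ContMDiff (modelWithCornersSelf ℝ B)
        ((modelWithCornersSelf ℝ B).prod (modelWithCornersSelf ℝ F)) (⊤ : ℕ∞)
        fun z => TotalSpace.mk' F z (σ j z)) ∧
      ∀ y ∈ W, S y = 0 →
        LinearMap.range ((ContinuousLinearMap.toLinearMap (M₂ := F)
            (mfderiv (modelWithCornersSelf ℝ B) (modelWithCornersSelf ℝ F)
            (fun z => (trivializationAt F E y (TotalSpace.mk' F z (S z))).2) y) :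
              TangentSpace (modelWithCornersSelf ℝ B) y →ₗ[ℝ] F)) ⊔
          Submodule.span ℝ
            (Set.range fun j => (trivializationAt F E y (TotalSpace.mk' F y (σ j y))).2) = ⊤ := by
  classical
  set e := trivializationAt F E x with he
  set ψ := chartAt B x with hψ
  have hxe : x ∈ e.baseSet := FiberBundle.mem_baseSet_trivializationAt' x
  have hxψ : x ∈ ψ.source := mem_chart_source B x
  set O : Set X := e.baseSet ∩ ψ.source with hOdef
  have hOopen : IsOpen O := e.open_baseSet.inter ψ.open_source
  have hxO : x ∈ O := ⟨hxe, hxψ⟩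
  set sx : X → F := fun z => (e (TotalSpace.mk' F z (S z))).2 with hsxdef
  -- smoothness of the local representative in the fixed trivialization `e`
  have hsx : ∀ z₀ ∈ e.baseSet, ContMDiffAt (modelWithCornersSelf ℝ B)
      (modelWithCornersSelf ℝ F) (⊤ : ℕ∞) sx z₀ := by
    intro z₀ hz₀
    have h0 : ContMDiffAt (modelWithCornersSelf ℝ B) (modelWithCornersSelf ℝ F) (⊤ : ℕ∞)
        (fun z => (trivializationAt F E z₀ (TotalSpace.mk' F z (S z))).2) z₀ :=
      (Bundle.contMDiffAt_section _).mp (hS z₀)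
    have hcc : ContMDiffAt (modelWithCornersSelf ℝ B) (modelWithCornersSelf ℝ (F →L[ℝ] F)) (⊤ : ℕ∞)
        (fun z => ((trivializationAt F E z₀).coordChangeL ℝ e z : F →L[ℝ] F)) z₀ :=
      contMDiffAt_coordChangeL (FiberBundle.mem_baseSet_trivializationAt' z₀) hz₀
    refine (hcc.clm_apply h0).congr_of_eventuallyEq ?_
    filter_upwards [((trivializationAt F E z₀).open_baseSet.inter e.open_baseSet).mem_nhds
      ⟨FiberBundle.mem_baseSet_trivializationAt' z₀, hz₀⟩] with z hz
    calc sx z = (trivializationAt F E z₀).coordChangeL ℝ e z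
          ((trivializationAt F E z₀ (TotalSpace.mk' F z (S z))).2) := by
          show (e (TotalSpace.mk' F z (S z))).2 = _
          rw [Trivialization.coordChangeL_apply _ _ hz, Trivialization.symm_apply_apply_mk _ hz.1]
      _ = _ := rfl
  set U : Set B := ψ.target ∩ ψ.symm ⁻¹' O with hUdef
  have hUopen : IsOpen U := ψ.isOpen_inter_preimage_symm hOopen
  have hmemU : ∀ y ∈ O, ψ y ∈ U := fun y hy =>
    ⟨ψ.map_source hy.2, by rw [Set.mem_preimage, ψ.left_inv hy.2]; exact hy⟩
  set G : B → F := fun b => sx (ψ.symm b) with hGdef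
  have hGsm : ContMDiffOn (modelWithCornersSelf ℝ B) (modelWithCornersSelf ℝ F) (⊤ : ℕ∞) G U := by
    intro b hb
    have h1 : ContMDiffAt (modelWithCornersSelf ℝ B) (modelWithCornersSelf ℝ B) (⊤ : ℕ∞) ψ.symm b :=
      contMDiffOn_chart_symm.contMDiffAt (ψ.open_target.mem_nhds hb.1)
    exact ((hsx _ (hb.2 : ψ.symm b ∈ O).1).comp b h1).contMDiffWithinAt
  have hGc := hGsm.contDiffOn
  have hone : 1 ≤ ((⊤ : ℕ∞) : WithTop ℕ∞) := by exact_mod_cast (le_top : (1:ℕ∞) ≤ ⊤)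
  have hGder : ContinuousOn (fderiv ℝ G) U := hGc.continuousOn_fderiv_of_isOpen hUopen hone
  -- the key local formula for the vertical differential at zeros of `S`
  have hksy : ∀ y, y ∈ O → S y = 0 →
      mfderiv (modelWithCornersSelf ℝ B) (modelWithCornersSelf ℝ F)
          (fun z => (trivializationAt F E y (TotalSpace.mk' F z (S z))).2) y
        = (((e.coordChangeL ℝ (trivializationAt F E y) y : F →L[ℝ] F).comp
              (fderiv ℝ G (ψ y))).comp
            (mfderiv (modelWithCornersSelf ℝ B) (modelWithCornersSelf ℝ B) ψ y)) := by
    intro y hyO hy0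
    set ey := trivializationAt F E y with heydef
    have hyey : y ∈ ey.baseSet := FiberBundle.mem_baseSet_trivializationAt' y
    have hyψ : y ∈ ψ.source := hyO.2
    have hψyU : ψ y ∈ U := hmemU y hyO
    set A : B → (F →L[ℝ] F) := fun b => (e.coordChangeL ℝ ey (ψ.symm b) : F →L[ℝ] F) with hAdef
    set H : B → F := fun b => A b (G b) with hHdef
    have hev : (fun z => (ey (TotalSpace.mk' F z (S z))).2) =ᶠ[nhds y] (H ∘ ψ) := by
      filter_upwards [(hOopen.inter ey.open_baseSet).mem_nhds ⟨hyO, hyey⟩] with z hz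
      have hzz : ψ.symm (ψ z) = z := ψ.left_inv hz.1.2
      show (ey (TotalSpace.mk' F z (S z))).2 = A (ψ z) (G (ψ z))
      calc (ey (TotalSpace.mk' F z (S z))).2
          = e.coordChangeL ℝ ey z ((e (TotalSpace.mk' F z (S z))).2) := by
            rw [Trivialization.coordChangeL_apply _ _ ⟨hz.1.1, hz.2⟩,
              Trivialization.symm_apply_apply_mk _ hz.1.1]
        _ = A (ψ z) (G (ψ z)) := by
            show _ = (e.coordChangeL ℝ ey (ψ.symm (ψ z)) : F →L[ℝ] F) (sx (ψ.symm (ψ z)))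
            rw [hzz]
            rfl
    have hAc : ContMDiffAt (modelWithCornersSelf ℝ B) (modelWithCornersSelf ℝ (F →L[ℝ] F)) (⊤ : ℕ∞)
        A (ψ y) := by
      have h1 : ContMDiffAt (modelWithCornersSelf ℝ B) (modelWithCornersSelf ℝ B) (⊤ : ℕ∞)
          ψ.symm (ψ y) := contMDiffOn_chart_symm.contMDiffAt (ψ.open_target.mem_nhds hψyU.1)
      have h2 : ContMDiffAt (modelWithCornersSelf ℝ B) (modelWithCornersSelf ℝ (F →L[ℝ] F)) (⊤ : ℕ∞)
          (fun b => (e.coordChangeL ℝ ey b : F →L[ℝ] F)) (ψ.symm (ψ y)) := by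
        rw [ψ.left_inv hyψ]
        exact contMDiffAt_coordChangeL hyO.1 hyey
      exact h2.comp (ψ y) h1
    have hAd : DifferentiableAt ℝ A (ψ y) :=
      (hAc.mdifferentiableAt (by simp)).differentiableAt
    have hGd : DifferentiableAt ℝ G (ψ y) :=
      ((hGc.contDiffAt (hUopen.mem_nhds hψyU)).differentiableAt (by simp))
    have hG0 : G (ψ y) = 0 := by
      have h1 : ψ.symm (ψ y) = y := ψ.left_inv hyψ
      show sx (ψ.symm (ψ y)) = 0
      rw [h1]
      show (e (TotalSpace.mk' F y (S y))).2 = 0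
      rw [hy0]
      exact (e.linear ℝ hyO.1).map_zero
    have hfH : fderiv ℝ H (ψ y) = (A (ψ y)).comp (fderiv ℝ G (ψ y)) := by
      rw [hHdef, fderiv_clm_apply hAd hGd, hG0]
      simp
    have hψd : MDifferentiableAt (modelWithCornersSelf ℝ B) (modelWithCornersSelf ℝ B) ψ y :=
      (contMDiffOn_chart (n := (⊤ : ℕ∞)).contMDiffAt (ψ.open_source.mem_nhds hyψ)).mdifferentiableAt (by simp)
    have hHmd : MDifferentiableAt (modelWithCornersSelf ℝ B) (modelWithCornersSelf ℝ F) H (ψ y) :=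
      mdifferentiableAt_iff_differentiableAt.mpr (hAd.clm_apply hGd)
    rw [hev.mfderiv_eq, mfderiv_comp y hHmd hψd, mfderiv_eq_fderiv, hfH]
    congr 2
    show (e.coordChangeL ℝ ey (ψ.symm (ψ y)) : F →L[ℝ] F) = _
    rw [ψ.left_inv hyψ]
    -- Fredholm at `x` gives complementing vectors
  have hψdx_surj : Function.Surjective
      (mfderiv (modelWithCornersSelf ℝ B) (modelWithCornersSelf ℝ B) ψ x) :=
    aux_chart_mfderiv_surj x hxψ
  obtain ⟨k, v', hv'⟩ := aux_exists_sup_span _ hFredx.2.2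
  have hTxeq := hksy x hxO hx
  set gx : F ≃L[ℝ] F := e.coordChangeL ℝ (trivializationAt F E x) x with hgxdef
  have hrangex : LinearMap.range (ContinuousLinearMap.toLinearMap (M₂ := F)
      (mfderiv (modelWithCornersSelf ℝ B) (modelWithCornersSelf ℝ F)
      (fun z => (trivializationAt F E x (TotalSpace.mk' F z (S z))).2) x)) =
      Submodule.map (((gx : F →L[ℝ] F)) : F →ₗ[ℝ] F)
        (LinearMap.range (fderiv ℝ G (ψ x) : B →ₗ[ℝ] F)) := by
    rw [hTxeq]
    exact aux_range_comp _ _ _ hψdx_surj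
  set v : Fin k → F := fun j => gx.symm (v' j) with hvdef
  have hvx : LinearMap.range (fderiv ℝ G (ψ x) : B →ₗ[ℝ] F) ⊔ Submodule.span ℝ (Set.range v) = ⊤ := by
    refine (aux_equiv_sup (((gx : F →L[ℝ] F)) : F →ₗ[ℝ] F)
      gx.injective gx.surjective _ v).mp ?_
    have h1 : (Set.range fun j => (((gx : F →L[ℝ] F)) : F →ₗ[ℝ] F) (v j)) = Set.range v' := by
      apply congrArg Set.range
      funext j
      show gx (gx.symm (v' j)) = v' j
      exact gx.apply_symm_apply (v' j)
    rw [h1, ← hrangex]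
    exact hv'
  -- cutoff function and the sections
  obtain ⟨β, hβsm, hβ01, hβ1, hβsupp⟩ := hcut x O hOopen hxO
  set σ : Fin k → ∀ z, E z := fun j z => β z • e.symm z (v j) with hσdef
  have hσsm : ∀ j, ContMDiff (modelWithCornersSelf ℝ B)
      ((modelWithCornersSelf ℝ B).prod (modelWithCornersSelf ℝ F)) (⊤ : ℕ∞)
      (fun z => TotalSpace.mk' F z (σ j z)) := by
    intro j z₀
    by_cases hz₀ : z₀ ∈ e.baseSet
    · rw [Bundle.contMDiffAt_section]
      have hz₀' : z₀ ∈ (trivializationAt F E z₀).baseSet :=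
        FiberBundle.mem_baseSet_trivializationAt' z₀
      have hsm : ContMDiffAt (modelWithCornersSelf ℝ B) (modelWithCornersSelf ℝ F) (⊤ : ℕ∞)
          (fun z => β z •
            ((e.coordChangeL ℝ (trivializationAt F E z₀) z : F →L[ℝ] F) (v j))) z₀ :=
        (hβsm z₀).smul ((contMDiffAt_coordChangeL hz₀ hz₀').clm_apply contMDiffAt_const)
      refine hsm.congr_of_eventuallyEq ?_
      filter_upwards [(e.open_baseSet.inter
        (trivializationAt F E z₀).open_baseSet).mem_nhds ⟨hz₀, hz₀'⟩] with z hz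
      calc (trivializationAt F E z₀ (TotalSpace.mk' F z (σ j z))).2
          = β z • ((trivializationAt F E z₀) (TotalSpace.mk' F z (e.symm z (v j)))).2 :=
            ((trivializationAt F E z₀).linear ℝ hz.2).map_smul _ _
        _ = β z • (e.coordChangeL ℝ (trivializationAt F E z₀) z (v j)) := by
            rw [Trivialization.coordChangeL_apply _ _ hz]
        _ = _ := rfl
    · have hz₀' : z₀ ∉ tsupport β := fun hmem => hz₀ (hβsupp hmem).1
      have hev : ∀ᶠ z in nhds z₀, β z = 0 := by
        filter_upwards [(isClosed_tsupport β).isOpen_compl.mem_nhds hz₀'] with z hz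
        exact image_eq_zero_of_notMem_tsupport hz
      refine ((Bundle.contMDiff_zeroSection (𝕜 := ℝ) (E := E)
        (IB := modelWithCornersSelf ℝ B)) z₀).congr_of_eventuallyEq ?_
      filter_upwards [hev] with z hz
      show TotalSpace.mk' F z (σ j z) = Bundle.zeroSection F E z
      have hzero : σ j z = 0 := by rw [hσdef]; simp only [hz, zero_smul]
      rw [hzero]
      rfl
  -- the perturbed operators
  set L : (Fin k → ℝ) →L[ℝ] F :=
    LinearMap.toContinuousLinearMap (Fintype.linearCombination ℝ v) with hLdef
  set Φ : X → ((B × (Fin k → ℝ)) →L[ℝ] F) := fun z =>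
    (fderiv ℝ G (ψ z)).comp (ContinuousLinearMap.fst ℝ B (Fin k → ℝ)) +
      L.comp (ContinuousLinearMap.snd ℝ B (Fin k → ℝ)) with hΦdef
  have hΦrange : ∀ z, LinearMap.range (Φ z : (B × (Fin k → ℝ)) →ₗ[ℝ] F) =
      LinearMap.range (fderiv ℝ G (ψ z) : B →ₗ[ℝ] F) ⊔ Submodule.span ℝ (Set.range v) := fun z =>
    aux_range_combine _ v
  have hΦcont : ContinuousOn Φ O := by
    have h1 : ContinuousOn (fun z => fderiv ℝ G (ψ z)) O :=
      hGder.comp (ψ.continuousOn.mono Set.inter_subset_right) (fun z hz => hmemU z hz)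
    have h2 : Continuous (fun T : B →L[ℝ] F =>
        T.comp (ContinuousLinearMap.fst ℝ B (Fin k → ℝ)) +
          L.comp (ContinuousLinearMap.snd ℝ B (Fin k → ℝ))) := by
      refine Continuous.add ?_ continuous_const
      exact ((ContinuousLinearMap.compL ℝ (B × (Fin k → ℝ)) B F).flip
        (ContinuousLinearMap.fst ℝ B (Fin k → ℝ))).continuous
    exact h2.comp_continuousOn h1
  have hSopen : IsOpen {T : (B × (Fin k → ℝ)) →L[ℝ] F | Function.Surjective T} := by
    rw [isOpen_iff_mem_nhds]
    intro T hT
    exact aux_eventually_surjective hT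
  refine ⟨k, σ, (O ∩ Φ ⁻¹' {T | Function.Surjective T}) ∩ interior {z : X | β z = 1},
    (hΦcont.isOpen_inter_preimage hOopen hSopen).inter isOpen_interior,
    ⟨⟨hxO, ?_⟩, mem_interior_iff_mem_nhds.mpr hβ1⟩, hσsm, ?_⟩
  · show Function.Surjective (Φ x)
    refine LinearMap.range_eq_top.mp ?_
    rw [hΦrange x]
    exact hvx
  · intro y hyW hy0
    have hyO : y ∈ O := hyW.1.1
    have hyβ : β y = 1 := (interior_subset hyW.2 : y ∈ {z : X | β z = 1})
    have hsurj : Function.Surjective (Φ y) := hyW.1.2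
    have h0y : LinearMap.range (fderiv ℝ G (ψ y) : B →ₗ[ℝ] F) ⊔ Submodule.span ℝ (Set.range v) = ⊤ := by
      rw [← hΦrange y]
      exact LinearMap.range_eq_top.mpr hsurj
    have hyey : y ∈ (trivializationAt F E y).baseSet :=
      FiberBundle.mem_baseSet_trivializationAt' y
    have hσval : (fun j => ((trivializationAt F E y) (TotalSpace.mk' F y (σ j y))).2) =
        fun j => (((e.coordChangeL ℝ (trivializationAt F E y) y : F →L[ℝ] F)) : F →ₗ[ℝ] F)
          (v j) := by
      funext j
      calc ((trivializationAt F E y) (TotalSpace.mk' F y (σ j y))).2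
          = β y • ((trivializationAt F E y) (TotalSpace.mk' F y (e.symm y (v j)))).2 :=
            ((trivializationAt F E y).linear ℝ hyey).map_smul _ _
        _ = β y • (e.coordChangeL ℝ (trivializationAt F E y) y (v j)) := by
            rw [Trivialization.coordChangeL_apply _ _ ⟨hyO.1, hyey⟩]
        _ = _ := by rw [hyβ, one_smul]; rfl
    rw [hksy y hyO hy0, hσval]
    convert (aux_equiv_sup _ (e.coordChangeL ℝ (trivializationAt F E y) y).injective
      (e.coordChangeL ℝ (trivializationAt F E y) y).surjective _ v).mpr h0y using 2
    exact aux_range_comp _ _ _ (aux_chart_mfderiv_surj x hyO.2)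
    rfl


/-- **Lemma 1.4.** Let `X` be a smooth Banach manifold admitting smooth cut-off functions and
`E → X` a smooth Banach vector bundle. Let `S` be a smooth section with compact zero locus
`Z(S)` whose vertical differential `DS(x)` is Fredholm at every `x ∈ Z(S)`. Then there exist an
open neighborhood `𝒪` of `Z(S)` and finitely many smooth sections `σ₁, …, σ_m` of `E` such that
(i) `DS(y)(T_yX) + span {σ₁(y), …, σ_m(y)} = E_y` for every `y ∈ Z(S)` (expressed in the
trivialization at `y`), and (ii) `supp σᵢ ⊆ 𝒪` for every `i`. -/
theorem exists_finitely_many_spanning_sections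
    {B : Type*} [NormedAddCommGroup B] [NormedSpace ℝ B] [CompleteSpace B]
    {X : Type*} [TopologicalSpace X] [ChartedSpace B X]
    [IsManifold (modelWithCornersSelf ℝ B) ((⊤ : ℕ∞) : WithTop ℕ∞) X]
    {F : Type*} [NormedAddCommGroup F] [NormedSpace ℝ F] [CompleteSpace F]
    (E : X → Type*) [∀ x, TopologicalSpace (E x)] [∀ x, AddCommGroup (E x)]
    [∀ x, Module ℝ (E x)]
    [TopologicalSpace (TotalSpace F E)] [FiberBundle F E] [VectorBundle ℝ F E]
    [ContMDiffVectorBundle ((⊤ : ℕ∞) : WithTop ℕ∞) F E (modelWithCornersSelf ℝ B)]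
    (hcut : ∀ (x : X) (O : Set X), IsOpen O → x ∈ O →
      ∃ β : X → ℝ, ContMDiff (modelWithCornersSelf ℝ B) (modelWithCornersSelf ℝ ℝ) (⊤ : ℕ∞) β ∧
        (∀ y, β y ∈ Set.Icc (0 : ℝ) 1) ∧ (∀ᶠ y in nhds x, β y = 1) ∧ tsupport β ⊆ O)
    (S : ∀ x, E x)
    (hS : ContMDiff (modelWithCornersSelf ℝ B)
      ((modelWithCornersSelf ℝ B).prod (modelWithCornersSelf ℝ F)) (⊤ : ℕ∞)
      fun x => TotalSpace.mk' F x (S x))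
    (hcpt : IsCompact {x | S x = 0})
    (hFred : ∀ x, S x = 0 →
      IsFredholm (mfderiv (modelWithCornersSelf ℝ B) (modelWithCornersSelf ℝ F)
        (fun y => (trivializationAt F E x (TotalSpace.mk' F y (S y))).2) x)) :
    ∃ (𝒪 : Set X) (m : ℕ) (σ : Fin m → ∀ x, E x),
      IsOpen 𝒪 ∧ {x | S x = 0} ⊆ 𝒪 ∧
      (∀ i, ContMDiff (modelWithCornersSelf ℝ B)
        ((modelWithCornersSelf ℝ B).prod (modelWithCornersSelf ℝ F)) (⊤ : ℕ∞)
        fun x => TotalSpace.mk' F x (σ i x)) ∧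
      (∀ i, closure {x | σ i x ≠ 0} ⊆ 𝒪) ∧
      ∀ y, S y = 0 →
        LinearMap.range ((ContinuousLinearMap.toLinearMap (M₂ := F)
            (mfderiv (modelWithCornersSelf ℝ B) (modelWithCornersSelf ℝ F)
            (fun z => (trivializationAt F E y (TotalSpace.mk' F z (S z))).2) y) :
              TangentSpace (modelWithCornersSelf ℝ B) y →ₗ[ℝ] F)) ⊔
          Submodule.span ℝ
            (Set.range fun i => (trivializationAt F E y (TotalSpace.mk' F y (σ i y))).2) = ⊤ := by
  classical
  choose! k σ W hWopen hxW hσsm hmain using fun x (hx : S x = 0) =>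
    aux_local E hcut S hS x hx (hFred x hx)
  obtain ⟨t, htZ, htfin, htcover⟩ := hcpt.elim_finite_subcover_image
    (fun x hx => hWopen x hx) (fun y hy => Set.mem_biUnion hy (hxW y hy))
  haveI := htfin.fintype
  let ι := Σ z : t, Fin (k z)
  refine ⟨Set.univ, Fintype.card ι,
    fun i => σ ((Fintype.equivFin ι).symm i).1 ((Fintype.equivFin ι).symm i).2,
    isOpen_univ, Set.subset_univ _, ?_, fun i => Set.subset_univ _, ?_⟩
  · intro i
    exact hσsm _ (htZ ((Fintype.equivFin ι).symm i).1.2) _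
  · intro y hy0
    obtain ⟨x, hxt, hyW⟩ : ∃ x ∈ t, y ∈ W x := by
      have := htcover hy0
      simpa using this
    have hxZ : S x = 0 := htZ hxt
    have h := hmain x hxZ y hyW hy0
    rw [eq_top_iff, ← h]
    apply sup_le_sup_left
    apply Submodule.span_mono
    rintro f ⟨j, rfl⟩
    refine ⟨Fintype.equivFin ι ⟨⟨x, hxt⟩, j⟩, ?_⟩
    have hi : ((Fintype.equivFin ι).symm ((Fintype.equivFin ι) ⟨⟨x, hxt⟩, j⟩)) = (⟨⟨x, hxt⟩, j⟩ : ι) := Equiv.symm_apply_apply _ _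
    exact congrArg (fun p : ι =>
      (trivializationAt F E y (TotalSpace.mk' F y (σ (p.fst : X) p.snd y))).2) hi
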